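/- Let ε ≥ 0, δ ∈ [0,1], let π₀ be the optimal (ε,δ)-DP partition selection primitive (π₀(0)=0, π₀(n+1)=min(e^ε·π₀(n)+δ, 1−e^{−ε}(1−π₀(n)−δ), 1)). Let U be a finite set of partitions, and let M be any randomized mechanism taking histograms (n_i)_{i∈U} ∈ ℕ^U to subsets of U, such that M never outputs a partition i with n_i = 0, and such that for each i ∈ U and each pair of histograms differing only by n_i vs n_i + 1, and each set S of subsets of U, P[M ∈ S] changes by at most the (ε,δ)-DP bound. Then for every histogram (n_i)_{i∈U}, the expected output size E[|M((n_i))|] ≤ ∑_{i∈U} π₀(n_i). -/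
import Mathlib


open Real

theorem optimal_mechanism_expected_output_size
    (ε δ : ℝ) (hε : 0 ≤ ε) (hδ0 : 0 ≤ δ) (hδ1 : δ ≤ 1)
    (π₀ : ℕ → ℝ) (h0 : π₀ 0 = 0)
    (hrec : ∀ n, π₀ (n + 1) =
      min (min (exp ε * π₀ n + δ) (1 - exp (-ε) * (1 - π₀ n - δ))) 1)
    (U : Type*) [Fintype U] [DecidableEq U]
    -- `P D T` is the probability that mechanism `M` outputs the set `T ⊆ U`
    -- on input histogram `D : U → ℕ`.
    (P : (U → ℕ) → Finset U → ℝ)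
    (hPnonneg : ∀ D T, 0 ≤ P D T)
    (hPsum : ∀ D, ∑ T : Finset U, P D T = 1)
    -- `M` never outputs a partition with zero users:
    (hEmpty : ∀ (D : U → ℕ) (i : U), D i = 0 → ∀ T : Finset U, i ∈ T → P D T = 0)
    -- (ε,δ)-DP on adjacent histograms, differing by +1 in one coordinate:
    (hDP : ∀ (D : U → ℕ) (i : U) (S : Finset (Finset U)),
      (∑ T ∈ S, P (Function.update D i (D i + 1)) T) ≤
        exp ε * (∑ T ∈ S, P D T) + δ ∧
      (∑ T ∈ S, P D T) ≤
        exp ε * (∑ T ∈ S, P (Function.update D i (D i + 1)) T) + δ) :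
    ∀ D : U → ℕ,
      (∑ T : Finset U, P D T * (T.card : ℝ)) ≤ ∑ i : U, π₀ (D i) := by
  intro D
  have key : ∀ i : U, ∑ T ∈ Finset.univ.filter (fun T : Finset U => i ∈ T), P D T
      ≤ π₀ (D i) := by
    intro i
    have main : ∀ n : ℕ,
        ∑ T ∈ Finset.univ.filter (fun T : Finset U => i ∈ T),
          P (Function.update D i n) T ≤ π₀ n := by
      intro n
      induction n with
      | zero =>
        have : ∀ T ∈ Finset.univ.filter (fun T : Finset U => i ∈ T),
            P (Function.update D i 0) T = 0 := by
          intro T hT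
          rw [Finset.mem_filter] at hT
          exact hEmpty _ i (by simp) T hT.2
        rw [Finset.sum_eq_zero this, h0]
      | succ n ih =>
        set D1 := Function.update D i n with hD1
        have hup : Function.update D1 i (D1 i + 1) = Function.update D i (n + 1) := by
          simp [hD1, Function.update_idem]
        have hDP1 := hDP D1 i (Finset.univ.filter (fun T : Finset U => i ∈ T))
        have hDP2 := hDP D1 i (Finset.univ.filter (fun T : Finset U => ¬ i ∈ T))
        rw [hup] at hDP1 hDP2
        set g := ∑ T ∈ Finset.univ.filter (fun T : Finset U => i ∈ T), P D1 T with hg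
        set g' := ∑ T ∈ Finset.univ.filter (fun T : Finset U => i ∈ T),
          P (Function.update D i (n + 1)) T with hg'
        have hsplit1 : g + ∑ T ∈ Finset.univ.filter (fun T : Finset U => ¬ i ∈ T),
            P D1 T = 1 := by
          rw [hg, Finset.sum_filter_add_sum_filter_not]; exact hPsum D1
        have hsplit2 : g' + ∑ T ∈ Finset.univ.filter (fun T : Finset U => ¬ i ∈ T),
            P (Function.update D i (n + 1)) T = 1 := by
          rw [hg', Finset.sum_filter_add_sum_filter_not]; exact hPsum _
        have hle1 : g' ≤ 1 := by
          rw [← hPsum (Function.update D i (n + 1))]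
          exact Finset.sum_le_sum_of_subset_of_nonneg (Finset.filter_subset _ _)
            (fun T _ _ => hPnonneg _ T)
        have hpos : (0:ℝ) < exp ε := exp_pos ε
        have hinv : exp (-ε) * exp ε = 1 := by
          rw [← exp_add]; simp
        have hb1 : g' ≤ exp ε * π₀ n + δ := by
          have := hDP1.1
          have hmul : exp ε * g ≤ exp ε * π₀ n :=
            mul_le_mul_of_nonneg_left ih (le_of_lt hpos)
          linarith
        have hb2 : g' ≤ 1 - exp (-ε) * (1 - π₀ n - δ) := by
          have h2 := hDP2.2
          -- 1 - g ≤ exp ε * (1 - g') + δ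
          have h3 : 1 - g ≤ exp ε * (1 - g') + δ := by
            have e1 : ∑ T ∈ Finset.univ.filter (fun T : Finset U => ¬ i ∈ T), P D1 T
                = 1 - g := by linarith
            have e2 : ∑ T ∈ Finset.univ.filter (fun T : Finset U => ¬ i ∈ T),
                P (Function.update D i (n + 1)) T = 1 - g' := by linarith
            rw [e1, e2] at h2; exact h2
          have h4 : exp (-ε) * (1 - g - δ) ≤ exp (-ε) * (exp ε * (1 - g')) := by
            apply mul_le_mul_of_nonneg_left _ (le_of_lt (exp_pos _))
            linarith
          rw [← mul_assoc, hinv, one_mul] at h4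
          have h5 : exp (-ε) * (1 - π₀ n - δ) ≤ exp (-ε) * (1 - g - δ) := by
            apply mul_le_mul_of_nonneg_left _ (le_of_lt (exp_pos _))
            linarith
          linarith
        rw [hrec n]
        exact le_min (le_min hb1 hb2) hle1
    have := main (D i)
    rwa [Function.update_eq_self] at this
  calc ∑ T : Finset U, P D T * (T.card : ℝ)
      = ∑ T : Finset U, ∑ i ∈ T, P D T := by
        refine Finset.sum_congr rfl fun T _ => ?_
        rw [Finset.sum_const, nsmul_eq_mul, mul_comm]
    _ = ∑ i : U, ∑ T ∈ Finset.univ.filter (fun T : Finset U => i ∈ T), P D T := by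
        simp_rw [Finset.sum_filter]
        rw [Finset.sum_comm]
        refine Finset.sum_congr rfl fun T _ => ?_
        simp [Finset.sum_ite_mem]
    _ ≤ ∑ i : U, π₀ (D i) := Finset.sum_le_sum fun i _ => key i
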